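/- Let G be a graph, S a subset of vertices, and let m_S denote the number of edges of G with both endpoints in S. Let T be the set of vertices v in S such that v is minimal (with respect to a fixed linear order on the vertices) in its closed neighbourhood within the induced subgraph G[S]. Then T is an independent set in G and |T| ≥ |S| − m_S. -/

import Mathlib

/-- Let `S` be a set of vertices of a graph `G` whose vertices carry a linear order, and
let `m_S` be the number of edges of `G` with both endpoints in `S`.  The set `T` of
vertices of `S` that are smaller than all their neighbours within `G[S]` is an
independent set of `G` with `|T| ≥ |S| - m_S`. -/
theorem stmt_4 {V : Type} [Fintype V] [LinearOrder V]
    (G : SimpleGraph V) [DecidableRel G.Adj] (S : Finset V) :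
    let mS := (G.edgeFinset.filter (fun e => ∀ x ∈ e, x ∈ S)).card
    let T := S.filter (fun v => ∀ u ∈ S, G.Adj v u → v < u)
    (∀ u ∈ T, ∀ v ∈ T, u ≠ v → ¬ G.Adj u v) ∧ S.card - mS ≤ T.card := by
  intro mS T
  constructor
  · intro u hu v hv huv hadj
    simp only [T, Finset.mem_filter] at hu hv
    exact absurd (hv.2 u hu.1 hadj.symm) (not_lt.2 (hu.2 v hv.1 hadj).le)
  · have hTS : T ⊆ S := Finset.filter_subset _ _
    have hkey : (S \ T).card ≤ mS := by
      classical
      have hex : ∀ v ∈ S \ T, ∃ u ∈ S, G.Adj v u ∧ u < v := by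
        intro v hv
        simp only [Finset.mem_sdiff, T, Finset.mem_filter, not_and, not_forall] at hv
        obtain ⟨hvS, hnt⟩ := hv
        obtain ⟨u, huS, hadj, hlt⟩ := hnt hvS
        exact ⟨u, huS, hadj, lt_of_le_of_ne (not_lt.1 hlt) (G.ne_of_adj hadj).symm⟩
      set g : V → V := fun v => if h : ∃ u ∈ S, G.Adj v u ∧ u < v then h.choose else v with hg
      have hgspec : ∀ v ∈ S \ T, g v ∈ S ∧ G.Adj v (g v) ∧ g v < v := by
        intro v hv
        have h := hex v hv
        simp only [hg, dif_pos h]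
        obtain ⟨h1, h2, h3⟩ := h.choose_spec
        exact ⟨h1, h2, h3⟩
      apply Finset.card_le_card_of_injOn (fun v => s(v, g v))
      · intro v hv
        obtain ⟨h1, h2, h3⟩ := hgspec v hv
        simp only [Finset.mem_coe, Finset.mem_filter, SimpleGraph.mem_edgeFinset, SimpleGraph.mem_edgeSet]
        refine ⟨h2, ?_⟩
        intro x hx
        rcases Sym2.mem_iff.1 hx with rfl | rfl
        · exact (Finset.mem_sdiff.1 hv).1
        · exact h1
      · intro v hv v' hv' heq
        obtain ⟨_, _, h3⟩ := hgspec v hv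
        obtain ⟨_, _, h3'⟩ := hgspec v' hv'
        rcases Sym2.eq_iff.1 heq with ⟨rfl, _⟩ | ⟨h, h'⟩
        · rfl
        · exfalso
          have h1 : g v < g v' := by rw [← h]; exact h3
          have h2 : g v' < g v := by rw [h']; exact h3'
          exact absurd h1 (not_lt.2 h2.le)
    have := Finset.card_sdiff_of_subset hTS
    omega
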